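/- Let k ≥ 2, r ≥ 1 and ℓ be integers with 1 ≤ ℓ ≤ k − 1. Then (ks − 1)^r · Z_{kr+ℓ}(s) tends to ((−1)^{(k−1)r}/(k^r · r!))·Z_ℓ(1/k) as s tends to 1/k (through s ≠ 1/k); that is, the leading coefficient C_{kr+ℓ}(k) of Z_{kr+ℓ} at its pole of order r at s = 1/k, in the variable (ks − 1), equals ((−1)^{(k−1)r}/(k^r · r!))·Z_ℓ(1/k). -/
import Mathlib


open Filter Topology Complex

/-- The meromorphic continuation of the Euler–Zagier multiple zeta-function with
identical arguments, defined recursively by Newton's identities: `Z 0 s = 1` and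
`Z r s = (1/r) · Σ_{j=1}^{r} (−1)^{j−1} Z (r−j) s · ζ(js)` (here the summation index
`i = j − 1` runs over `Finset.range r`), where `ζ` is the analytically continued
Riemann zeta function. -/
noncomputable def Z : ℕ → ℂ → ℂ
  | 0, _ => 1
  | (r + 1), s =>
      (1 / ((r : ℂ) + 1)) *
        ∑ i ∈ Finset.range (r + 1),
          (-1 : ℂ) ^ i * Z (r - i) s * riemannZeta (((i : ℂ) + 1) * s)

noncomputable def Ak (k q : ℕ) : ℂ :=
  (-1 : ℂ) ^ ((k - 1) * q) / ((k : ℂ) ^ q * (Nat.factorial q : ℂ))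

lemma Z_mul (m : ℕ) (hm : m ≠ 0) (s : ℂ) :
    (m : ℂ) * Z m s
      = ∑ i ∈ Finset.range m,
          (-1 : ℂ) ^ i * Z (m - 1 - i) s * riemannZeta (((i : ℂ) + 1) * s) := by
  obtain ⟨r, rfl⟩ := Nat.exists_eq_succ_of_ne_zero hm
  have h : ((r : ℂ) + 1) ≠ 0 := Nat.cast_add_one_ne_zero r
  rw [Z, ← mul_assoc, show ((r + 1 : ℕ) : ℂ) = (r : ℂ) + 1 by push_cast; ring,
    mul_one_div, div_self h, one_mul]
  simp only [Nat.succ_sub_one]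

lemma Ak_succ (k : ℕ) (hk : 2 ≤ k) (q : ℕ) :
    (-1 : ℂ) ^ (k - 1) * Ak k q = (k : ℂ) * ((q : ℂ) + 1) * Ak k (q + 1) := by
  have hk0 : (k : ℂ) ≠ 0 := Nat.cast_ne_zero.2 (by omega)
  have hq0 : (Nat.factorial q : ℂ) ≠ 0 := Nat.cast_ne_zero.2 (Nat.factorial_ne_zero q)
  have hkq : (k : ℂ) ^ q ≠ 0 := pow_ne_zero _ hk0
  have hq1 : ((q : ℂ) + 1) ≠ 0 := Nat.cast_add_one_ne_zero q
  have h1 : (k : ℂ) ^ q * (Nat.factorial q : ℂ) ≠ 0 := mul_ne_zero hkq hq0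
  have h2 : (k : ℂ) ^ (q + 1) * (Nat.factorial (q + 1) : ℂ) ≠ 0 := by
    refine mul_ne_zero (pow_ne_zero _ hk0) ?_
    exact Nat.cast_ne_zero.2 (Nat.factorial_ne_zero (q + 1))
  unfold Ak
  rw [mul_div_assoc', mul_div_assoc', div_eq_div_iff h1 h2, Nat.mul_succ, pow_add,
    Nat.factorial_succ, pow_succ]
  push_cast
  ring

lemma zeta_tendsto (k n : ℕ) (hk : 2 ≤ k) (hn : n ≠ k) :
    Tendsto (fun s : ℂ => riemannZeta ((n : ℂ) * s)) (𝓝[≠] (1 / (k : ℂ)))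
      (𝓝 (riemannZeta ((n : ℂ) * (1 / (k : ℂ))))) := by
  have hk0 : (k : ℂ) ≠ 0 := Nat.cast_ne_zero.2 (by omega)
  have harg : (n : ℂ) * (1 / (k : ℂ)) ≠ 1 := by
    rw [mul_one_div]
    intro h
    rw [div_eq_one_iff_eq hk0] at h
    exact hn (by exact_mod_cast h)
  have hc : ContinuousAt riemannZeta ((n : ℂ) * (1 / (k : ℂ))) :=
    (differentiableAt_riemannZeta harg).continuousAt
  have hmul : Tendsto (fun s : ℂ => (n : ℂ) * s) (𝓝 (1 / (k : ℂ)))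
      (𝓝 ((n : ℂ) * (1 / (k : ℂ)))) := by
    have hc2 : Continuous (fun s : ℂ => (n : ℂ) * s) := by fun_prop
    exact hc2.tendsto _
  exact (hc.tendsto.comp hmul).mono_left nhdsWithin_le_nhds

lemma map_tendsto (k : ℕ) (hk : 2 ≤ k) :
    Tendsto (fun s : ℂ => (k : ℂ) * s) (𝓝[≠] (1 / (k : ℂ))) (𝓝[≠] (1 : ℂ)) := by
  have hk0 : (k : ℂ) ≠ 0 := Nat.cast_ne_zero.2 (by omega)
  have h1 : Tendsto (fun s : ℂ => (k : ℂ) * s) (𝓝 (1 / (k : ℂ))) (𝓝 1) := by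
    have hc : Continuous (fun s : ℂ => (k : ℂ) * s) := by fun_prop
    have := hc.tendsto (1 / (k : ℂ))
    simpa [mul_one_div, div_self hk0, mul_inv_cancel₀ hk0] using this
  refine tendsto_nhdsWithin_of_tendsto_nhds_of_eventually_within _
    (h1.mono_left nhdsWithin_le_nhds) ?_
  filter_upwards [self_mem_nhdsWithin] with s hs
  have hs' : s ≠ 1 / (k : ℂ) := hs
  show ((k : ℂ) * s) ∈ ({1}ᶜ : Set ℂ)
  simp only [Set.mem_compl_iff, Set.mem_singleton_iff]
  intro h
  exact hs' ((eq_div_iff hk0).mpr (by rw [mul_comm] at h; exact h))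

lemma res_tendsto (k : ℕ) (hk : 2 ≤ k) :
    Tendsto (fun s : ℂ => ((k : ℂ) * s - 1) * riemannZeta ((k : ℂ) * s))
      (𝓝[≠] (1 / (k : ℂ))) (𝓝 1) :=
  riemannZeta_residue_one.comp (map_tendsto k hk)

lemma pow_tendsto (k : ℕ) (hk : 2 ≤ k) (e : ℕ) (he : 1 ≤ e) :
    Tendsto (fun s : ℂ => ((k : ℂ) * s - 1) ^ e) (𝓝[≠] (1 / (k : ℂ))) (𝓝 0) := by
  have hk0 : (k : ℂ) ≠ 0 := Nat.cast_ne_zero.2 (by omega)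
  have h1 : Tendsto (fun s : ℂ => (k : ℂ) * s - 1) (𝓝 (1 / (k : ℂ))) (𝓝 0) := by
    have hc : Continuous (fun s : ℂ => (k : ℂ) * s - 1) := by fun_prop
    have := hc.tendsto (1 / (k : ℂ))
    simpa [mul_one_div, div_self hk0, mul_inv_cancel₀ hk0] using this
  have := h1.pow e
  rw [zero_pow (by omega : e ≠ 0)] at this
  exact this.mono_left nhdsWithin_le_nhds

lemma main_lemma (k : ℕ) (hk : 2 ≤ k) :
    ∀ m q j : ℕ, j < k → m = k * q + j →
      Tendsto (fun s : ℂ => ((k : ℂ) * s - 1) ^ q * Z m s) (𝓝[≠] (1 / (k : ℂ)))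
        (𝓝 (Ak k q * Z j (1 / (k : ℂ)))) := by
  intro m
  induction m using Nat.strong_induction_on with
  | _ m ih =>
  intro q j hj hm
  rcases Nat.eq_zero_or_pos m with hm0 | hm1
  · -- m = 0, hence q = 0 and j = 0
    subst hm0
    have hkq0 : k * q = 0 ∧ j = 0 := by omega
    have hq0 : q = 0 := by
      rcases Nat.mul_eq_zero.mp hkq0.1 with h | h
      · omega
      · exact h
    subst hq0
    rw [hkq0.2]
    simp only [pow_zero, one_mul]
    have : Ak k 0 = 1 := by simp [Ak, Nat.factorial]
    rw [this, one_mul]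
    simp only [Z]
    exact tendsto_const_nhds
  · -- m ≥ 1
    have hk0C : (k : ℂ) ≠ 0 := Nat.cast_ne_zero.2 (by omega)
    have hmC : (m : ℂ) ≠ 0 := Nat.cast_ne_zero.2 (by omega)
    have hterm : ∀ i ∈ Finset.range m,
        Tendsto (fun s : ℂ => ((k : ℂ) * s - 1) ^ q *
            ((-1 : ℂ) ^ i * Z (m - 1 - i) s * riemannZeta (((i : ℂ) + 1) * s)))
          (𝓝[≠] (1 / (k : ℂ)))
          (𝓝 ((if i < j then
              (-1 : ℂ) ^ i * (Ak k q * Z (j - 1 - i) (1 / (k : ℂ)))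
                * riemannZeta (((i : ℂ) + 1) * (1 / (k : ℂ))) else 0)
            + (if j ≤ i ∧ i + 1 = k then
              (-1 : ℂ) ^ (k - 1) * (Ak k (q - 1) * Z j (1 / (k : ℂ))) else 0))) := by
      intro i hi
      rw [Finset.mem_range] at hi
      by_cases hij : i < j
      · -- case A
        have hik : i + 1 ≠ k := by omega
        rw [if_pos hij, if_neg (by omega : ¬(j ≤ i ∧ i + 1 = k)), add_zero]
        have h1 := ih (m - 1 - i) (by omega) q (j - 1 - i) (by omega)
          (by omega : m - 1 - i = k * q + (j - 1 - i))
        have h2 := zeta_tendsto k (i + 1) hk hik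
        have h3 := (h1.const_mul ((-1 : ℂ) ^ i)).mul h2
        push_cast at h3
        exact h3.congr fun s => by ring
      · -- i ≥ j
        have hq1 : 1 ≤ q := by
          rcases Nat.eq_zero_or_pos q with h0 | h
          · subst h0; simp at hm; omega
          · exact h
        by_cases hik : i + 1 = k
        · -- case B
          rw [if_neg hij, if_pos ⟨by omega, hik⟩, zero_add]
          have hsucc : q - 1 + 1 = q := by omega
          have hmulsucc : k * q = k * (q - 1) + k := by
            conv_lhs => rw [← hsucc]
            rw [Nat.mul_succ]
          have h1 := ih (m - 1 - i) (by omega) (q - 1) j hj (by omega)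
          have h3 := (h1.const_mul ((-1 : ℂ) ^ i)).mul (res_tendsto k hk)
          have hi' : i = k - 1 := by omega
          have hicast : ((i : ℂ) + 1) = (k : ℂ) := by exact_mod_cast hik
          have hval : (-1 : ℂ) ^ (k - 1) * (Ak k (q - 1) * Z j (1 / (k : ℂ)))
              = (-1 : ℂ) ^ i * (Ak k (q - 1) * Z j (1 / (k : ℂ))) * 1 := by
            rw [hi', mul_one]
          rw [hval]
          refine h3.congr fun s => ?_
          rw [hicast]
          conv_rhs => rw [← hsucc, pow_succ]
          ring
        · -- case C
          rw [if_neg hij, if_neg (fun hc => hik hc.2), add_zero]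
          have hkkq : k ≤ k * q := Nat.le_mul_of_pos_right k hq1
          have hnlt : m - 1 - i < k * q := by omega
          have hdec : m - 1 - i = k * ((m - 1 - i) / k) + (m - 1 - i) % k :=
            (Nat.div_add_mod _ _).symm
          have hj' : (m - 1 - i) % k < k := Nat.mod_lt _ (by omega)
          have hq'lt : (m - 1 - i) / k < q := by
            rw [Nat.div_lt_iff_lt_mul (by omega : 0 < k)]
            rw [mul_comm] at hnlt
            exact hnlt
          have h1 := ih (m - 1 - i) (by omega) ((m - 1 - i) / k) ((m - 1 - i) % k) hj' hdec
          have hz := zeta_tendsto k (i + 1) hk hik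
          have hpow := pow_tendsto k hk (q - (m - 1 - i) / k) (by omega)
          have h3 := (hpow.mul h1).mul (hz.const_mul ((-1 : ℂ) ^ i))
          push_cast at h3
          have hval : (0 : ℂ) = 0 * (Ak k ((m - 1 - i) / k) * Z ((m - 1 - i) % k) (1 / (k : ℂ)))
              * ((-1 : ℂ) ^ i * riemannZeta (((i : ℂ) + 1) * (1 / (k : ℂ)))) := by ring
          rw [hval]
          refine h3.congr fun s => ?_
          rw [← mul_assoc, ← mul_assoc, ← pow_add, Nat.sub_add_cancel hq'lt.le]
          ring
    have hsum := tendsto_finset_sum (Finset.range m) hterm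
    have hZj : ∑ i ∈ Finset.range j,
        ((-1 : ℂ) ^ i * (Ak k q * Z (j - 1 - i) (1 / (k : ℂ)))
          * riemannZeta (((i : ℂ) + 1) * (1 / (k : ℂ))))
        = Ak k q * ((j : ℂ) * Z j (1 / (k : ℂ))) := by
      rcases Nat.eq_zero_or_pos j with hj0 | hj1
      · subst hj0; simp
      · rw [Z_mul j (by omega) (1 / (k : ℂ)), Finset.mul_sum]
        exact Finset.sum_congr rfl fun i hi => by ring
    have hs1 : ∑ i ∈ Finset.range m,
        (if i < j then
          (-1 : ℂ) ^ i * (Ak k q * Z (j - 1 - i) (1 / (k : ℂ)))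
            * riemannZeta (((i : ℂ) + 1) * (1 / (k : ℂ))) else 0)
        = Ak k q * ((j : ℂ) * Z j (1 / (k : ℂ))) := by
      rw [← hZj, ← Finset.sum_filter]
      congr 1
      ext x
      simp only [Finset.mem_filter, Finset.mem_range]
      omega
    have hgsum : (∑ i ∈ Finset.range m,
        ((if i < j then
          (-1 : ℂ) ^ i * (Ak k q * Z (j - 1 - i) (1 / (k : ℂ)))
            * riemannZeta (((i : ℂ) + 1) * (1 / (k : ℂ))) else 0)
        + (if j ≤ i ∧ i + 1 = k then
          (-1 : ℂ) ^ (k - 1) * (Ak k (q - 1) * Z j (1 / (k : ℂ))) else 0)))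
        = (m : ℂ) * (Ak k q * Z j (1 / (k : ℂ))) := by
      rw [Finset.sum_add_distrib, hs1]
      rcases Nat.eq_zero_or_pos q with hq0 | hq1
      · -- q = 0 : m = j, second sum is zero
        subst hq0
        simp only [Nat.mul_zero, Nat.zero_add] at hm
        have hzero : ∑ i ∈ Finset.range m,
            (if j ≤ i ∧ i + 1 = k then
              (-1 : ℂ) ^ (k - 1) * (Ak k (0 - 1) * Z j (1 / (k : ℂ))) else 0) = 0 := by
          refine Finset.sum_eq_zero fun i hi => ?_
          rw [Finset.mem_range] at hi
          exact if_neg (by omega)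
        rw [hzero, add_zero, hm]
        ring
      · -- q ≥ 1 : second sum has one term at i = k - 1
        have hkkq : k ≤ k * q := Nat.le_mul_of_pos_right k hq1
        have hsingle : ∑ i ∈ Finset.range m,
            (if j ≤ i ∧ i + 1 = k then
              (-1 : ℂ) ^ (k - 1) * (Ak k (q - 1) * Z j (1 / (k : ℂ))) else 0)
            = (-1 : ℂ) ^ (k - 1) * (Ak k (q - 1) * Z j (1 / (k : ℂ))) := by
          rw [Finset.sum_eq_single_of_mem (k - 1) (Finset.mem_range.2 (by omega))
            (fun b _ hb => if_neg (fun hc => hb (by omega)))]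
          exact if_pos ⟨by omega, by omega⟩
        rw [hsingle]
        have hsucc : q - 1 + 1 = q := by omega
        have hB := Ak_succ k hk (q - 1)
        rw [hsucc] at hB
        have hqcast : ((q - 1 : ℕ) : ℂ) + 1 = (q : ℂ) := by
          have : ((q - 1 : ℕ) : ℂ) = (q : ℂ) - 1 := by
            push_cast [Nat.cast_sub hq1]; ring
          rw [this]; ring
        rw [hqcast] at hB
        have hmcast : (m : ℂ) = (k : ℂ) * (q : ℂ) + (j : ℂ) := by
          rw [hm]; push_cast; ring
        rw [show (-1 : ℂ) ^ (k - 1) * (Ak k (q - 1) * Z j (1 / (k : ℂ)))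
            = ((-1 : ℂ) ^ (k - 1) * Ak k (q - 1)) * Z j (1 / (k : ℂ)) from
          (mul_assoc _ _ _).symm, hB, hmcast]
        ring
    have hFeq : (fun s : ℂ => ((k : ℂ) * s - 1) ^ q * Z m s)
        = fun s : ℂ => (m : ℂ)⁻¹ * ∑ i ∈ Finset.range m,
            ((k : ℂ) * s - 1) ^ q *
              ((-1 : ℂ) ^ i * Z (m - 1 - i) s * riemannZeta (((i : ℂ) + 1) * s)) := by
      funext s
      rw [← Finset.mul_sum, ← Z_mul m (by omega) s,
        show (m : ℂ)⁻¹ * (((k : ℂ) * s - 1) ^ q * ((m : ℂ) * Z m s))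
          = ((m : ℂ)⁻¹ * (m : ℂ)) * (((k : ℂ) * s - 1) ^ q * Z m s) from by ring,
        inv_mul_cancel₀ hmC, one_mul]
    rw [hFeq]
    have hfinal := hsum.const_mul ((m : ℂ)⁻¹)
    rw [hgsum, inv_mul_cancel_left₀ hmC] at hfinal
    exact hfinal

theorem multiple_zeta_leading_coeff_kr_add_l (k r l : ℕ) (hk : 2 ≤ k) (hr : 1 ≤ r)
    (hl1 : 1 ≤ l) (hlk : l ≤ k - 1) :
    Tendsto (fun s : ℂ => ((k : ℂ) * s - 1) ^ r * Z (k * r + l) s)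
      (𝓝[≠] (1 / (k : ℂ)))
      (𝓝 ((-1 : ℂ) ^ ((k - 1) * r) / ((k : ℂ) ^ r * (Nat.factorial r : ℂ)) * Z l (1 / (k : ℂ)))) := by
  exact main_lemma k hk (k * r + l) r l (by omega) rfl
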